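/- Let U ⊆ ℂ be open and let b, c : U → ℂ be complex-differentiable on U. Then the matrix-valued function z ↦ Ĥ(b(z), c(z)) is complex-differentiable on U and satisfies Ĥ(b,c)′ = Ĥ(b,c) · N(b′, c′) at every point of U. -/

import Mathlib

open Matrix

noncomputable section

/-- `Ĥ(b,c)`: the 4×4 complex matrix with rows
`(1+s, s, b, c)`, `(−s, 1−s, −b, −c)`, `(b, b, 1, 0)`, `(c, c, 0, 1)`, where `s = (b²+c²)/2`. -/
def Hhat (b c : ℂ) : Matrix (Fin 4) (Fin 4) ℂ :=
  !![1 + (b ^ 2 + c ^ 2) / 2, (b ^ 2 + c ^ 2) / 2, b, c;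
     -((b ^ 2 + c ^ 2) / 2), 1 - (b ^ 2 + c ^ 2) / 2, -b, -c;
     b, b, 1, 0;
     c, c, 0, 1]

/-- `N(p,q)`: the 4×4 complex matrix with rows
`(0,0,p,q)`, `(0,0,−p,−q)`, `(p,p,0,0)`, `(q,q,0,0)`. -/
def Nmat (p q : ℂ) : Matrix (Fin 4) (Fin 4) ℂ :=
  !![0, 0, p, q;
     0, 0, -p, -q;
     p, p, 0, 0;
     q, q, 0, 0]

/-- if `b, c` are complex-differentiable on open `U` with derivatives `b′, c′`,
then `z ↦ Ĥ(b(z), c(z))` is complex-differentiable on `U` with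
`Ĥ(b,c)′ = Ĥ(b,c) · N(b′, c′)`. -/
theorem stmt1 (U : Set ℂ) (hU : IsOpen U) (b c b' c' : ℂ → ℂ)
    (hb : ∀ z ∈ U, HasDerivAt b (b' z) z)
    (hc : ∀ z ∈ U, HasDerivAt c (c' z) z) :
    ∀ z ∈ U, ∀ i j : Fin 4,
      HasDerivAt (fun w => Hhat (b w) (c w) i j)
        ((Hhat (b z) (c z) * Nmat (b' z) (c' z)) i j) z := by
  intro z hz i j
  have hb' := hb z hz
  have hc' := hc z hz
  have hs : HasDerivAt (fun w => (b w ^ 2 + c w ^ 2) / 2)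
      (b z * b' z + c z * c' z) z := by
    have h := ((hb'.pow 2).add (hc'.pow 2)).div_const 2
    refine h.congr_deriv ?_
    push_cast
    ring
  fin_cases i <;> fin_cases j <;>
    simp [Hhat, Nmat, Matrix.mul_apply, Fin.sum_univ_four, Matrix.vecHead, Matrix.vecTail] <;>
    first
    | exact hasDerivAt_const z _
    | (convert hs using 1 <;> first | ring1 | (funext w; ring1))
    | (convert hs.neg using 1 <;> first | ring1 | rfl | (funext w; ring1))
    | (convert hs.const_add 1 using 1 <;> first | ring1 | (funext w; ring1))
    | (convert hs.const_sub 1 using 1 <;> first | ring1 | rfl | (funext w; ring1))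
    | (convert hb' using 1 <;> first | ring1 | (funext w; ring1))
    | (convert hb'.neg using 1 <;> first | ring1 | rfl | (funext w; ring1))
    | (convert hc' using 1 <;> first | ring1 | (funext w; ring1))
    | (convert hc'.neg using 1 <;> first | ring1 | rfl | (funext w; ring1))
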